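/- Let {x_n} be a sequence in a Hilbert space H and C a nonempty closed convex set such that |x_n − y| is nonincreasing in n for every y ∈ C. Then {x_n} has at most one weak cluster point belonging to C; i.e., if subsequences of {x_n} converge weakly to v ∈ C and to w ∈ C, then v = w. -/

import Mathlib

open Filter

theorem stmt_11 {H : Type*} [NormedAddCommGroup H] [InnerProductSpace ℝ H]
    (C : Set H) (hC : C.Nonempty) (hclosed : IsClosed C) (hconv : Convex ℝ C)
    (x : ℕ → H)
    (hfejer : ∀ y ∈ C, ∀ n, ‖x (n + 1) - y‖ ≤ ‖x n - y‖)
    (v w : H) (hv : v ∈ C) (hw : w ∈ C)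
    (φ ψ : ℕ → ℕ) (hφ : StrictMono φ) (hψ : StrictMono ψ)
    (hvw : ∀ y : H, Tendsto (fun k => (inner ℝ (x (φ k)) y : ℝ)) atTop (nhds (inner ℝ v y)))
    (hww : ∀ y : H, Tendsto (fun k => (inner ℝ (x (ψ k)) y : ℝ)) atTop (nhds (inner ℝ w y))) :
    v = w := by
  -- each y ∈ C gives a convergent norm sequence
  have hlim : ∀ y ∈ C, ∃ a : ℝ, Tendsto (fun n => ‖x n - y‖) atTop (nhds a) := by
    intro y hy
    have hanti : Antitone fun n => ‖x n - y‖ :=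
      antitone_nat_of_succ_le fun n => hfejer y hy n
    have hbdd : BddBelow (Set.range fun n => ‖x n - y‖) :=
      ⟨0, by rintro r ⟨n, rfl⟩; positivity⟩
    exact ⟨_, tendsto_atTop_ciInf hanti hbdd⟩
  obtain ⟨a, ha⟩ := hlim v hv
  obtain ⟨b, hb⟩ := hlim w hw
  -- the full sequence of inner products converges
  have key : ∀ n : ℕ, (inner ℝ (x n) (v - w) : ℝ)
      = (‖x n - w‖ ^ 2 - ‖x n - v‖ ^ 2 - ‖w‖ ^ 2 + ‖v‖ ^ 2) / 2 := by
    intro n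
    have h1 : ‖x n - v‖ ^ 2 = ‖x n‖ ^ 2 - 2 * inner ℝ (x n) v + ‖v‖ ^ 2 :=
      norm_sub_sq_real (x n) v
    have h2 : ‖x n - w‖ ^ 2 = ‖x n‖ ^ 2 - 2 * inner ℝ (x n) w + ‖w‖ ^ 2 :=
      norm_sub_sq_real (x n) w
    have h3 : (inner ℝ (x n) (v - w) : ℝ) = inner ℝ (x n) v - inner ℝ (x n) w :=
      inner_sub_right _ _ _
    rw [h3, h1, h2]; ring
  have hinner : Tendsto (fun n => (inner ℝ (x n) (v - w) : ℝ)) atTop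
      (nhds ((b ^ 2 - a ^ 2 - ‖w‖ ^ 2 + ‖v‖ ^ 2) / 2)) := by
    simp only [key]
    exact (((((hb.pow 2).sub (ha.pow 2)).sub tendsto_const_nhds).add
      tendsto_const_nhds).div_const 2)
  set L := (b ^ 2 - a ^ 2 - ‖w‖ ^ 2 + ‖v‖ ^ 2) / 2
  have hLv : (inner ℝ v (v - w) : ℝ) = L :=
    tendsto_nhds_unique (hvw (v - w)) (hinner.comp hφ.tendsto_atTop)
  have hLw : (inner ℝ w (v - w) : ℝ) = L :=
    tendsto_nhds_unique (hww (v - w)) (hinner.comp hψ.tendsto_atTop)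
  have : (inner ℝ (v - w) (v - w) : ℝ) = 0 := by
    rw [inner_sub_left, hLv, hLw]; ring
  have := inner_self_eq_zero.mp this
  exact sub_eq_zero.mp this
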